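/- Let G be a group, A an abelian normal subgroup of G, and T = t_1A ∪ ⋯ ∪ t_nA ∪ A a union of cosets where t_1, …, t_n ∈ G commute with each other. Then T satisfies the Malcev law M_c(x,y) (c ≥ 1) if and only if for every t, u ∈ {1, t_1, …, t_n} the endomorphism of A obtained by evaluating f_c(X,Y) at the conjugation automorphisms t, u is the zero endomorphism. -/

import Mathlib

open Pointwise
open scoped IsMulCommutative

/-- Malcev word pair `(α_c, β_c)`. -/
def malcevPair {G : Type*} [Monoid G] (c : ℕ) (x y : G) : G × G :=
  Nat.rec (x, y) (fun _ p => (p.1 * p.2, p.2 * p.1)) c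

/-- The Malcev word `α_c(x,y)`. -/
def malcevAlpha {G : Type*} [Monoid G] (c : ℕ) (x y : G) : G := (malcevPair c x y).1

/-- The Malcev word `β_c(x,y)`. -/
def malcevBeta {G : Type*} [Monoid G] (c : ℕ) (x y : G) : G := (malcevPair c x y).2

/-- The evaluation of `f_c(X,Y) = (X-1)·∏_{i=0}^{c-2}(X^{2^i}Y^{2^i}-1)` at two
elements of a (possibly noncommutative) ring. -/
def fEval {R : Type*} [Ring R] (c : ℕ) (t u : R) : R :=
  (t - 1) * ((List.range (c - 1)).map fun i => t ^ 2 ^ i * u ^ 2 ^ i - 1).prod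

/-- The endomorphism of the abelian normal subgroup `A` (written additively)
induced by conjugation by `t`, i.e. `a ↦ a^t = t⁻¹ * a * t`. -/
def conjEnd {G : Type*} [Group G] (A : Subgroup G) [hN : A.Normal] [IsMulCommutative A]
    (t : G) : AddMonoid.End (Additive A) :=
  AddMonoidHom.mk'
    (fun a => Additive.ofMul (⟨t⁻¹ * ((Additive.toMul a : A) : G) * t, by
      simpa using hN.conj_mem _ (Additive.toMul a).2 t⁻¹⟩ : A))
    (fun a b => congrArg Additive.ofMul (Subtype.ext (by
      show t⁻¹ * ((Additive.toMul a * Additive.toMul b : A) : G) * t = _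
      simp only [toMul_ofMul, Subgroup.coe_mul]
      group)))

section Aux

lemma end_mul_apply {M : Type*} [AddCommMonoid M] (f g : AddMonoid.End M) (x : M) :
    (f * g) x = f (g x) := rfl

lemma end_sub_apply {M : Type*} [AddCommGroup M] (f g : AddMonoid.End M) (x : M) :
    (f - g) x = f x - g x := rfl

lemma end_zero_apply {M : Type*} [AddCommGroup M] (x : M) :
    (0 : AddMonoid.End M) x = 0 := rfl

lemma fEval_one {R : Type*} [Ring R] (t u : R) : fEval 1 t u = t - 1 := by
  simp [fEval]

lemma fEval_succ {R : Type*} [Ring R] {t u : R} (h : Commute t u) (c : ℕ) :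
    fEval (c + 1 + 1) t u = (t ^ 2 ^ c * u ^ 2 ^ c - 1) * fEval (c + 1) t u := by
  have hC : ∀ a b : ℕ, Commute (t ^ a * u ^ a) (t ^ b * u ^ b) := fun a b =>
    (((Commute.refl t).pow_pow a b).mul_right (h.pow_pow a b)).mul_left
      (((h.symm.pow_pow a b)).mul_right ((Commute.refl u).pow_pow a b))
  have key : ∀ x ∈ (List.range c).map (fun i => t ^ 2 ^ i * u ^ 2 ^ i - 1),
      Commute (t ^ 2 ^ c * u ^ 2 ^ c - 1) x := by
    intro x hx
    simp only [List.mem_map] at hx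
    obtain ⟨i, -, rfl⟩ := hx
    exact ((hC _ _).sub_right (Commute.one_right _)).sub_left
      ((Commute.one_left _).sub_right (Commute.one_right _))
  have ht1 : Commute (t ^ 2 ^ c * u ^ 2 ^ c - 1) (t - 1) :=
    ((((Commute.refl t).pow_left _).mul_left (h.symm.pow_left _)).sub_right
      (Commute.one_right _)).sub_left
      ((Commute.one_left _).sub_right (Commute.one_right _))
  have h1 : Commute (t ^ 2 ^ c * u ^ 2 ^ c - 1)
      ((t - 1) * ((List.range c).map fun i => t ^ 2 ^ i * u ^ 2 ^ i - 1).prod) :=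
    ht1.mul_right (Commute.list_prod_right _ _ key)
  simp only [fEval, Nat.add_sub_cancel]
  rw [List.range_succ, List.map_append, List.prod_append]
  simp only [List.map_cons, List.map_nil, List.prod_cons, List.prod_nil, mul_one]
  rw [← mul_assoc, ← h1.eq]

variable {G : Type*} [Group G] (A : Subgroup G) [A.Normal] [IsMulCommutative A]

lemma additive_ext {x y : Additive A}
    (h : ((Additive.toMul x : A) : G) = ((Additive.toMul y : A) : G)) : x = y :=
  Additive.toMul.injective (Subtype.ext h)

lemma coe_conjEnd (v : G) (a : Additive A) :
    ((Additive.toMul (conjEnd A v a) : A) : G) = v⁻¹ * ((Additive.toMul a : A) : G) * v := rfl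

lemma conjEnd_mul (v w : G) : conjEnd A (v * w) = conjEnd A w * conjEnd A v := by
  refine AddMonoid.End.ext (M := _) fun a => additive_ext A ?_
  rw [end_mul_apply, coe_conjEnd, coe_conjEnd, coe_conjEnd]
  group

lemma conjEnd_pow (v : G) (m : ℕ) : conjEnd A (v ^ m) = (conjEnd A v) ^ m := by
  induction m with
  | zero =>
    refine AddMonoid.End.ext (M := _) fun a => additive_ext A ?_
    rw [pow_zero, pow_zero, coe_conjEnd, AddMonoid.End.one_apply]
    group
  | succ m ih =>
    rw [pow_succ, conjEnd_mul, ih, ← pow_succ']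

lemma conjEnd_commute {v w : G} (hvw : Commute v w) :
    Commute (conjEnd A v) (conjEnd A w) := by
  show conjEnd A v * conjEnd A w = conjEnd A w * conjEnd A v
  refine AddMonoid.End.ext (M := _) fun a => additive_ext A ?_
  rw [end_mul_apply, end_mul_apply, coe_conjEnd, coe_conjEnd, coe_conjEnd, coe_conjEnd]
  calc v⁻¹ * (w⁻¹ * ((Additive.toMul a : A) : G) * w) * v
      = (w * v)⁻¹ * ((Additive.toMul a : A) : G) * (w * v) := by group
    _ = (v * w)⁻¹ * ((Additive.toMul a : A) : G) * (v * w) := by rw [← hvw.eq]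
    _ = w⁻¹ * (v⁻¹ * ((Additive.toMul a : A) : G) * v) * w := by group

lemma malcev_key (k : ℕ) (v w : G) (hvw : Commute v w) (a b : A) :
    ∃ p q : A,
      malcevAlpha (k + 1) (v * (a : G)) (w * (b : G)) = (v * w) ^ 2 ^ k * (p : G) ∧
      malcevBeta (k + 1) (v * (a : G)) (w * (b : G)) = (v * w) ^ 2 ^ k * (q : G) ∧
      Additive.ofMul p = Additive.ofMul q
        + fEval (k + 1) (conjEnd A w) (conjEnd A v) (Additive.ofMul a)
        - fEval (k + 1) (conjEnd A v) (conjEnd A w) (Additive.ofMul b) := by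
  induction k with
  | zero =>
    refine ⟨Additive.toMul (conjEnd A w (Additive.ofMul a)) * b,
            Additive.toMul (conjEnd A v (Additive.ofMul b)) * a, ?_, ?_, ?_⟩
    · show (v * (a : G)) * (w * (b : G)) = _
      rw [Subgroup.coe_mul, coe_conjEnd, toMul_ofMul, pow_zero, pow_one]
      group
    · show (w * (b : G)) * (v * (a : G)) = _
      rw [Subgroup.coe_mul, coe_conjEnd, toMul_ofMul, pow_zero, pow_one, hvw.eq]
      group
    · simp only [zero_add, ofMul_mul, ofMul_toMul, fEval_one, end_sub_apply,
        AddMonoid.End.one_apply]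
      abel
  | succ k ih =>
    obtain ⟨p, q, hα, hβ, hd⟩ := ih
    refine ⟨Additive.toMul (conjEnd A ((v * w) ^ 2 ^ k) (Additive.ofMul p)) * q,
            Additive.toMul (conjEnd A ((v * w) ^ 2 ^ k) (Additive.ofMul q)) * p, ?_, ?_, ?_⟩
    · show malcevAlpha (k + 1) (v * (a : G)) (w * (b : G)) *
          malcevBeta (k + 1) (v * (a : G)) (w * (b : G)) = _
      rw [hα, hβ, Subgroup.coe_mul, coe_conjEnd, toMul_ofMul, pow_succ 2 k, pow_mul]
      generalize (v * w) ^ 2 ^ k = g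
      group
    · show malcevBeta (k + 1) (v * (a : G)) (w * (b : G)) *
          malcevAlpha (k + 1) (v * (a : G)) (w * (b : G)) = _
      rw [hβ, hα, Subgroup.coe_mul, coe_conjEnd, toMul_ofMul, pow_succ 2 k, pow_mul]
      generalize (v * w) ^ 2 ^ k = g
      group
    · have hXY : Commute (conjEnd A v) (conjEnd A w) := conjEnd_commute A hvw
      have hE : conjEnd A ((v * w) ^ 2 ^ k) = (conjEnd A w * conjEnd A v) ^ 2 ^ k := by
        rw [conjEnd_pow, conjEnd_mul]
      have hFy : fEval (k + 1 + 1) (conjEnd A w) (conjEnd A v)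
          = ((conjEnd A w) ^ 2 ^ k * (conjEnd A v) ^ 2 ^ k - 1)
            * fEval (k + 1) (conjEnd A w) (conjEnd A v) := fEval_succ hXY.symm k
      have hFx : fEval (k + 1 + 1) (conjEnd A v) (conjEnd A w)
          = ((conjEnd A v) ^ 2 ^ k * (conjEnd A w) ^ 2 ^ k - 1)
            * fEval (k + 1) (conjEnd A v) (conjEnd A w) := fEval_succ hXY k
      have hYX : (conjEnd A w * conjEnd A v) ^ 2 ^ k
          = (conjEnd A w) ^ 2 ^ k * (conjEnd A v) ^ 2 ^ k := hXY.symm.mul_pow _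
      have hswap : (conjEnd A v) ^ 2 ^ k * (conjEnd A w) ^ 2 ^ k
          = (conjEnd A w) ^ 2 ^ k * (conjEnd A v) ^ 2 ^ k := (hXY.pow_pow _ _).eq
      simp only [ofMul_mul, ofMul_toMul, hE, hYX, hFy, hFx, hswap, hd]
      simp only [end_mul_apply, end_sub_apply, AddMonoid.End.one_apply,
        map_add, map_sub]
      abel

end Aux

theorem malcev_law_on_union_of_cosets_iff_fEval_eq_zero
    {G : Type*} [Group G] (A : Subgroup G) [A.Normal] [IsMulCommutative A]
    (c n : ℕ) (hc : 1 ≤ c) (t : Fin n → G)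
    (hcomm : ∀ i j, Commute (t i) (t j)) :
    (∀ x ∈ (⋃ i, t i • (A : Set G)) ∪ (A : Set G),
      ∀ y ∈ (⋃ i, t i • (A : Set G)) ∪ (A : Set G),
        malcevAlpha c x y = malcevBeta c x y) ↔
      ∀ v ∈ insert (1 : G) (Set.range t), ∀ w ∈ insert (1 : G) (Set.range t),
        fEval c (conjEnd A v) (conjEnd A w) = 0 := by
  obtain ⟨k, rfl⟩ : ∃ k, c = k + 1 := ⟨c - 1, (Nat.succ_pred_eq_of_pos hc).symm⟩
  have hS : ∀ v ∈ insert (1 : G) (Set.range t), ∀ w ∈ insert (1 : G) (Set.range t),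
      Commute v w := by
    rintro v (rfl | ⟨i, rfl⟩) w (rfl | ⟨j, rfl⟩)
    · exact Commute.refl 1
    · exact Commute.one_left _
    · exact Commute.one_right _
    · exact hcomm i j
  have hmem : ∀ v ∈ insert (1 : G) (Set.range t), ∀ a : A,
      v * (a : G) ∈ (⋃ i, t i • (A : Set G)) ∪ (A : Set G) := by
    rintro v (rfl | ⟨i, rfl⟩) a
    · right; simpa using a.2
    · left
      refine Set.mem_iUnion.2 ⟨i, ?_⟩
      exact Set.smul_mem_smul_set a.2
  have hrep : ∀ x ∈ (⋃ i, t i • (A : Set G)) ∪ (A : Set G),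
      ∃ v ∈ insert (1 : G) (Set.range t), ∃ a : A, x = v * (a : G) := by
    rintro x (hx | hx)
    · obtain ⟨i, hx⟩ := Set.mem_iUnion.1 hx
      obtain ⟨y, hy, rfl⟩ := hx
      exact ⟨t i, Or.inr ⟨i, rfl⟩, ⟨y, hy⟩, rfl⟩
    · exact ⟨1, Or.inl rfl, ⟨x, hx⟩, (one_mul x).symm⟩
  constructor
  · intro H v hv w hw
    refine AddMonoid.End.ext (M := _) fun z => ?_
    obtain ⟨p, q, hα, hβ, hd⟩ :=
      malcev_key A k w v (hS w hw v hv) (Additive.toMul z) 1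
    have heq := H (w * ((Additive.toMul z : A) : G)) (hmem w hw _)
      (v * ((1 : A) : G)) (hmem v hv 1)
    have h2 : (w * v) ^ 2 ^ k * ((p : A) : G) = (w * v) ^ 2 ^ k * ((q : A) : G) := by
      rw [← hα, ← hβ, heq]
    have hpq : p = q := Subtype.ext (mul_left_cancel h2)
    rw [hpq] at hd
    simp only [ofMul_one, map_zero, sub_zero, left_eq_add, ofMul_toMul] at hd
    rw [end_zero_apply]
    exact hd
  · intro H x hx y hy
    obtain ⟨v, hv, a, rfl⟩ := hrep x hx
    obtain ⟨w, hw, b, rfl⟩ := hrep y hy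
    obtain ⟨p, q, hα, hβ, hd⟩ := malcev_key A k v w (hS v hv w hw) a b
    rw [H w hw v hv, H v hv w hw] at hd
    simp only [end_zero_apply, add_zero, sub_zero] at hd
    have hpq : p = q := Additive.ofMul.injective hd
    rw [hα, hβ, hpq]
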